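/- Let X̃_1,…,X̃_n be random variables with |X̃_t| ≤ τ almost surely, let ξ_1,…,ξ_n be i.i.d. centred Laplace random variables with scale parameter 2τ/α, set Z_t = X̃_t + ξ_t, and let I_n^Z(ω) = (1/(2πn))|Σ_{t=1}^n (Z_t − Z̄_n)e^{−itω}|² be the periodogram of Z_1,…,Z_n. Then E[ ‖I_n^Z‖_∞⁴ ] ≤ (2^{11} n⁴ τ⁸)/π⁴ + 2^{19} τ⁸ (n+7)(n+6)···(n+1)n/(π⁴ n⁴ α⁸); in particular E‖I_n^Z‖_∞⁴ ≤ C n⁴ τ⁸/(1 ∧ α⁸) for a numerical constant C. -/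

import Mathlib

open MeasureTheory ProbabilityTheory Real
open scoped ENNReal NNReal

noncomputable def sampleMean (n : ℕ) (x : Fin n → ℝ) : ℝ := (∑ t, x t) / n

/-- The centred periodogram `I_n(ω) = (1/(2πn)) |∑_{t=1}^n (x_t - x̄_n) e^{-itω}|²`. -/
noncomputable def periodogram (n : ℕ) (x : Fin n → ℝ) (ω : ℝ) : ℝ :=
  (1 / (2 * π * n)) *
    ‖∑ t : Fin n, ((x t - sampleMean n x : ℝ) : ℂ) *
      Complex.exp (-(Complex.I * ((t.1 + 1 : ℕ) : ℂ) * (ω : ℂ)))‖ ^ 2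

/-- The sup-norm of a function on `[-π, π]`. -/
noncomputable def supNorm (g : ℝ → ℝ) : ℝ := sSup ((fun ω => |g ω|) '' Set.Icc (-π) π)

/-- `ξ` is a centred Laplace random variable with scale parameter `b`. -/
def IsLaplace {Ω : Type*} [MeasurableSpace Ω] (P : Measure Ω) (ξ : Ω → ℝ) (b : ℝ) : Prop :=
  Measure.map ξ P =
    volume.withDensity fun x => ENNReal.ofReal ((1 / (2 * b)) * Real.exp (-|x| / b))

lemma laplace_real_facts {b : ℝ} (hb : 0 < b) (k : ℕ) :
    Integrable (fun y : ℝ => (1 / (2*b)) * Real.exp (-|y| / b) * |y| ^ k) volume ∧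
    ∫ y : ℝ, (1 / (2*b)) * Real.exp (-|y| / b) * |y| ^ k = (k.factorial : ℝ) * b ^ k := by
  set g : ℝ → ℝ := fun x => (1 / (2*b)) * (x ^ ((k:ℝ)) * Real.exp (-(1/b) * x ^ (1:ℝ))) with hg
  have hfg : ∀ y : ℝ, (1 / (2*b)) * Real.exp (-|y| / b) * |y| ^ k = g |y| := by
    intro y
    have h1 : -|y| / b = -(1/b) * |y| ^ (1:ℝ) := by rw [rpow_one]; ring
    rw [hg]; simp only []
    rw [rpow_natCast, h1]; ring
  have hIoi : IntegrableOn g (Set.Ioi (0:ℝ)) volume := by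
    have := (integrableOn_rpow_mul_exp_neg_mul_rpow (p := 1) (s := (k:ℝ)) (b := 1/b)
      (lt_of_lt_of_le neg_one_lt_zero (Nat.cast_nonneg k)) one_pos (by positivity))
    exact this.const_mul _
  have hIoi' : IntegrableOn (fun y => g |y|) (Set.Ioi (0:ℝ)) volume := by
    apply hIoi.congr_fun _ measurableSet_Ioi
    intro y hy
    simp only []
    rw [abs_of_pos hy]
  have hIic : IntegrableOn (fun y => g |y|) (Set.Iic (0:ℝ)) volume := by
    rw [← Measure.map_neg_eq_self (volume : Measure ℝ)]
    have m : MeasurableEmbedding fun x : ℝ => -x := (Homeomorph.neg ℝ).measurableEmbedding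
    rw [m.integrableOn_map_iff]
    simp only [Function.comp_def, abs_neg, Set.neg_preimage, Set.neg_Iic, neg_zero]
    exact Iff.mpr integrableOn_Ici_iff_integrableOn_Ioi hIoi'
  have hint : Integrable (fun y => g |y|) volume := by
    have := hIic.union hIoi'
    rwa [Set.Iic_union_Ioi, integrableOn_univ] at this
  constructor
  · exact hint.congr (Filter.Eventually.of_forall fun y => (hfg y).symm)
  · have h2 : (∫ y : ℝ, (1 / (2*b)) * Real.exp (-|y| / b) * |y| ^ k)
        = ∫ y : ℝ, g |y| := by
      exact integral_congr_ae (Filter.Eventually.of_forall hfg)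
    rw [h2, integral_comp_abs (f := g)]
    rw [hg]
    rw [integral_const_mul]
    rw [integral_rpow_mul_exp_neg_mul_rpow (by norm_num) (lt_of_lt_of_le neg_one_lt_zero (Nat.cast_nonneg k)) (by positivity)]
    have h3 : ((1:ℝ)/b) ^ (-((k:ℝ) + 1) / 1) = b ^ (k+1 : ℕ) := by
      rw [div_one, one_div, ← Real.rpow_neg_one b, ← Real.rpow_natCast b (k+1),
        ← Real.rpow_mul hb.le]
      push_cast
      norm_num
    have h4 : Real.Gamma (((k:ℝ) + 1) / 1) = (k.factorial : ℝ) := by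
      rw [div_one]
      exact_mod_cast Real.Gamma_nat_eq_factorial k
    rw [h3, h4]
    rw [pow_succ]
    field_simp

lemma laplace_abs_moment {Ω : Type*} [MeasurableSpace Ω] {P : Measure Ω} {ξ : Ω → ℝ} {b : ℝ}
    (hb : 0 < b) (hm : Measurable ξ) (hL : IsLaplace P ξ b) (k : ℕ) :
    Integrable (fun x => |ξ x| ^ k) P ∧ ∫ x, |ξ x| ^ k ∂P = (k.factorial : ℝ) * b ^ k := by
  obtain ⟨hint0, hval0⟩ := laplace_real_facts hb k
  set ρ : ℝ → ℝ := fun y => (1 / (2*b)) * Real.exp (-|y| / b) with hρ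
  have hρ0 : ∀ y, 0 ≤ ρ y := fun y => by positivity
  have hρm : Measurable fun y => (ρ y).toNNReal :=
    (((measurable_abs.neg.div_const b).exp.const_mul _)).real_toNNReal
  have hgm : Measurable fun y : ℝ => |y| ^ k := measurable_abs.pow_const k
  have hmap : Measure.map ξ P = volume.withDensity fun y => ((ρ y).toNNReal : ℝ≥0∞) := hL
  have hsmul : ∀ y : ℝ, (ρ y).toNNReal • (|y| ^ k) = ρ y * |y| ^ k := by
    intro y
    rw [NNReal.smul_def, Real.coe_toNNReal _ (hρ0 y), smul_eq_mul]
  have hintmap : Integrable (fun y : ℝ => |y| ^ k) (Measure.map ξ P) := by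
    rw [hmap, integrable_withDensity_iff_integrable_smul hρm]
    exact (hint0.congr (Filter.Eventually.of_forall fun y => (hsmul y).symm))
  constructor
  · exact (integrable_map_measure hgm.aestronglyMeasurable hm.aemeasurable).mp hintmap
  · calc ∫ x, |ξ x| ^ k ∂P = ∫ y, |y| ^ k ∂(Measure.map ξ P) :=
          (integral_map hm.aemeasurable hgm.aestronglyMeasurable).symm
    _ = ∫ y, (ρ y).toNNReal • (|y| ^ k) := by
          rw [hmap, integral_withDensity_eq_integral_smul hρm]
    _ = ∫ y, ρ y * |y| ^ k := integral_congr_ae (Filter.Eventually.of_forall hsmul)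
    _ = (k.factorial : ℝ) * b ^ k := hval0

lemma asc_aux (k : ℕ) (x : ℝ) :
    x * ∏ i ∈ Finset.range k, (x + 1 + i) = (x + k) * ∏ i ∈ Finset.range k, (x + i) := by
  induction k with
  | zero => simp
  | succ k ih =>
    rw [Finset.prod_range_succ, Finset.prod_range_succ, ← mul_assoc, ih]
    push_cast; ring

lemma asc_identity (k : ℕ) (x : ℝ) :
    ∑ j ∈ Finset.range (k+1),
        ((k.choose j * (k - j).factorial : ℕ) : ℝ) * ∏ i ∈ Finset.range j, (x + i)
      = ∏ i ∈ Finset.range k, (x + 1 + i) := by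
  induction k with
  | zero => simp
  | succ k ih =>
    rw [Finset.sum_range_succ]
    have h1 : ∀ j ∈ Finset.range (k+1),
        (((k+1).choose j * (k+1-j).factorial : ℕ):ℝ) * ∏ i ∈ Finset.range j, (x+i)
          = ((k:ℝ)+1) * (((k.choose j * (k-j).factorial : ℕ):ℝ) * ∏ i ∈ Finset.range j, (x+i)) := by
      intro j hj; rw [Finset.mem_range] at hj
      have hj' : j ≤ k := Nat.lt_succ_iff.mp hj
      have key : (k+1).choose j * (k+1-j).factorial = (k+1) * (k.choose j * (k-j).factorial) := by
        have h2 : k + 1 - j = (k - j) + 1 := by omega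
        have h3 := Nat.choose_mul_succ_eq k j
        rw [h2, Nat.factorial_succ, h2] at *
        calc (k+1).choose j * ((k - j + 1) * (k-j).factorial)
            = ((k+1).choose j * (k - j + 1)) * (k-j).factorial := by ring
          _ = (k.choose j * (k+1)) * (k-j).factorial := by rw [← h3]
          _ = (k+1) * (k.choose j * (k-j).factorial) := by ring
      rw [key]; push_cast; ring
    rw [Finset.sum_congr rfl h1, ← Finset.mul_sum, ih]
    simp only [Nat.choose_self, Nat.sub_self, Nat.factorial_zero, Nat.cast_one, mul_one, one_mul]
    rw [Finset.prod_range_succ, Finset.prod_range_succ]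
    have h4 := asc_aux k x
    nlinarith [h4]

lemma sum_abs_moment {Ω : Type*} [MeasurableSpace Ω] {P : Measure Ω} [IsProbabilityMeasure P]
    {n : ℕ} {ξ : Fin n → Ω → ℝ} {b : ℝ} (hb : 0 < b) (hm : ∀ t, Measurable (ξ t))
    (hindep : iIndepFun ξ P) (hL : ∀ t, IsLaplace P (ξ t) b)
    (s : Finset (Fin n)) (k : ℕ) :
    Integrable (fun x => (∑ t ∈ s, |ξ t x|) ^ k) P ∧
      ∫ x, (∑ t ∈ s, |ξ t x|) ^ k ∂P = b ^ k * ∏ j ∈ Finset.range k, ((s.card : ℝ) + j) := by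
  classical
  induction s using Finset.induction_on generalizing k with
  | empty =>
    cases k with
    | zero => simp
    | succ k =>
      simp only [Finset.sum_empty, zero_pow (Nat.succ_ne_zero k), Finset.card_empty,
        Nat.cast_zero]
      constructor
      · exact integrable_zero _ _ _
      · rw [integral_zero, Finset.prod_eq_zero (Finset.mem_range.mpr (Nat.succ_pos k))]
        · ring
        · norm_num
  | @insert a s' ha ih =>
    set S : Ω → ℝ := fun x => ∑ t ∈ s', |ξ t x| with hS
    have hSm : Measurable S := Finset.measurable_sum _ (fun t _ => (hm t).abs)
    have hindepAS : IndepFun (fun x => |ξ a x|) S P := by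
      have h1 := hindep.indepFun_finset {a} s' (Finset.disjoint_singleton_left.mpr ha) hm
      have hφ : Measurable fun v : ({a} : Finset (Fin n)) → ℝ =>
          |v ⟨a, Finset.mem_singleton_self a⟩| := (measurable_pi_apply _).abs
      have hψ : Measurable fun v : ↥s' → ℝ => ∑ i, |v i| :=
        Finset.measurable_sum _ (fun i _ => (measurable_pi_apply i).abs)
      have h2 := h1.comp hφ hψ
      have h3 : S = fun x => ∑ i : ↥s', |ξ (↑i) x| :=
        funext fun x => (Finset.sum_coe_sort s' fun t => |ξ t x|).symm
      rw [h3]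
      exact h2
    have hind_j : ∀ j : ℕ, IndepFun (fun x => (S x)^j) (fun x => |ξ a x|^(k-j)) P :=
      fun j => hindepAS.symm.comp (measurable_id.pow_const j) (measurable_id.pow_const (k-j))
    have hmom := fun j : ℕ => laplace_abs_moment hb (hm a) (hL a) j
    have hterm_int : ∀ j : ℕ,
        Integrable (fun x => (S x)^j * |ξ a x|^(k-j) * (k.choose j : ℝ)) P := by
      intro j
      exact (((hind_j j).integrable_mul (ih j).1 (hmom (k-j)).1).mul_const _)
    have hexp : ∀ x, (∑ t ∈ insert a s', |ξ t x|)^k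
        = ∑ j ∈ Finset.range (k+1), (S x)^j * |ξ a x|^(k-j) * (k.choose j : ℝ) := by
      intro x; rw [Finset.sum_insert ha, add_comm, add_pow]
    have hint : Integrable (fun x => (∑ t ∈ insert a s', |ξ t x|)^k) P := by
      have := integrable_finset_sum (Finset.range (k+1))
        (fun j _ => hterm_int j)
      exact this.congr (Filter.Eventually.of_forall fun x => (hexp x).symm)
    refine ⟨hint, ?_⟩
    have hval : ∫ x, (∑ t ∈ insert a s', |ξ t x|)^k ∂P
        = ∑ j ∈ Finset.range (k+1),
            (b^j * ∏ i ∈ Finset.range j, ((s'.card : ℝ) + i))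
              * ((k-j).factorial * b^(k-j)) * (k.choose j : ℝ) := by
      rw [integral_congr_ae (Filter.Eventually.of_forall hexp),
        integral_finset_sum _ (fun j _ => hterm_int j)]
      refine Finset.sum_congr rfl fun j _ => ?_
      rw [integral_mul_const,
        show (fun x => S x ^ j * |ξ a x| ^ (k-j))
          = (fun x => S x ^ j) * (fun x => |ξ a x| ^ (k-j)) from rfl,
        (hind_j j).integral_mul_eq_mul_integral (ih j).1.aestronglyMeasurable (hmom (k-j)).1.aestronglyMeasurable,
        (ih j).2, (hmom (k-j)).2]
    rw [hval, Finset.card_insert_of_notMem ha]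
    have : ∀ j ∈ Finset.range (k+1),
        (b^j * ∏ i ∈ Finset.range j, ((s'.card : ℝ) + i))
            * ((k-j).factorial * b^(k-j)) * (k.choose j : ℝ)
          = b^k * (((k.choose j * (k - j).factorial : ℕ) : ℝ)
              * ∏ i ∈ Finset.range j, ((s'.card : ℝ) + i)) := by
      intro j hj
      rw [Finset.mem_range] at hj
      have : b^j * b^(k-j) = b^k := by
        rw [← pow_add]; congr 1; omega
      push_cast
      linear_combination (∏ i ∈ Finset.range j, ((s'.card:ℝ) + i))
        * ((k-j).factorial : ℝ) * ((k.choose j):ℝ) * this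
    rw [Finset.sum_congr rfl this, ← Finset.mul_sum, asc_identity k (s'.card : ℝ)]
    congr 1
    refine Finset.prod_congr rfl fun i _ => ?_
    push_cast
    ring

lemma periodogram_le {n : ℕ} (hn : 1 ≤ n) (x : Fin n → ℝ) (ω : ℝ) :
    |periodogram n x ω| ≤ (2 / (π * n)) * (∑ t, |x t|) ^ 2 := by
  have hπ := Real.pi_pos
  have hn' : (0:ℝ) < n := by exact_mod_cast hn
  have h0 : 0 ≤ periodogram n x ω := by
    unfold periodogram
    have : (0:ℝ) ≤ 1 / (2 * π * n) := by positivity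
    exact mul_nonneg this (sq_nonneg _)
  rw [abs_of_nonneg h0]
  unfold periodogram
  have hA : ‖∑ t : Fin n, ((x t - sampleMean n x : ℝ) : ℂ) *
      Complex.exp (-(Complex.I * ((t.1 + 1 : ℕ) : ℂ) * (ω : ℂ)))‖
      ≤ ∑ t, |x t - sampleMean n x| := by
    refine (norm_sum_le _ _).trans ?_
    refine Finset.sum_le_sum fun t _ => ?_
    rw [norm_mul, Complex.norm_real]
    have : ‖Complex.exp (-(Complex.I * ((t.1 + 1 : ℕ) : ℂ) * (ω : ℂ)))‖ = 1 := by
      rw [Complex.norm_exp]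
      simp [Complex.mul_re, Complex.mul_im]
    rw [this]
    simp [Real.norm_eq_abs]
  have hB : ∑ t, |x t - sampleMean n x| ≤ 2 * ∑ t, |x t| := by
    have h1 : ∑ t, |x t - sampleMean n x| ≤ ∑ t, (|x t| + |sampleMean n x|) :=
      Finset.sum_le_sum fun t _ => abs_sub (x t) (sampleMean n x)
    have h2 : ∑ t : Fin n, (|x t| + |sampleMean n x|)
        = (∑ t, |x t|) + n * |sampleMean n x| := by
      rw [Finset.sum_add_distrib, Finset.sum_const, Finset.card_univ, Fintype.card_fin,
        nsmul_eq_mul]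
    have h3 : (n : ℝ) * |sampleMean n x| ≤ ∑ t, |x t| := by
      unfold sampleMean
      rw [abs_div, abs_of_nonneg hn'.le]
      rw [mul_div_cancel₀ _ (ne_of_gt hn')]
      exact Finset.abs_sum_le_sum_abs _ _
    linarith
  calc (1 / (2 * π * n)) *
      ‖∑ t : Fin n, ((x t - sampleMean n x : ℝ) : ℂ) *
        Complex.exp (-(Complex.I * ((t.1 + 1 : ℕ) : ℂ) * (ω : ℂ)))‖ ^ 2
      ≤ (1 / (2 * π * n)) * (2 * ∑ t, |x t|) ^ 2 := by
        refine mul_le_mul_of_nonneg_left ?_ (by positivity)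
        exact pow_le_pow_left₀ (norm_nonneg _) (hA.trans hB) 2
    _ = (2 / (π * n)) * (∑ t, |x t|) ^ 2 := by
        field_simp

set_option maxHeartbeats 1000000 in
/-- **Fourth moment of the sup-norm of the privatized periodogram.**
If `|X̃_t| ≤ τ` a.s., `ξ_1,…,ξ_n` are i.i.d. centred Laplace with scale `2τ/α` and
`Z_t = X̃_t + ξ_t`, then `E ‖I_n^Z‖_∞⁴ ≤ 2¹¹n⁴τ⁸/π⁴ + 2¹⁹τ⁸(n+7)⋯(n+1)n/(π⁴n⁴α⁸)`;
in particular `E ‖I_n^Z‖_∞⁴ ≤ C n⁴τ⁸/(1 ∧ α⁸)` for a numerical constant `C`. -/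
theorem periodogram_supnorm_fourth_moment :
    ∃ C : ℝ, 0 < C ∧
      ∀ (Ω : Type) [MeasurableSpace Ω] (P : Measure Ω), IsProbabilityMeasure P →
      ∀ (n : ℕ), 1 ≤ n →
      ∀ (τ α : ℝ), 0 < τ → 0 < α →
      ∀ (Xt ξ : Fin n → Ω → ℝ),
        (∀ t, Measurable (Xt t)) → (∀ t, Measurable (ξ t)) →
        (∀ᵐ x ∂P, ∀ t, |Xt t x| ≤ τ) →
        iIndepFun ξ P →
        (∀ t, IsLaplace P (ξ t) (2 * τ / α)) →
      ∀ (Z : Fin n → Ω → ℝ), (∀ t x, Z t x = Xt t x + ξ t x) →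
        (∫ x, (supNorm (periodogram n fun t => Z t x)) ^ 4 ∂P
            ≤ 2 ^ 11 * n ^ 4 * τ ^ 8 / π ^ 4
              + 2 ^ 19 * τ ^ 8 * (∏ k ∈ Finset.range 8, ((n : ℝ) + k))
                / (π ^ 4 * n ^ 4 * α ^ 8)) ∧
          ∫ x, (supNorm (periodogram n fun t => Z t x)) ^ 4 ∂P
            ≤ C * n ^ 4 * τ ^ 8 / min 1 (α ^ 8) := by
  refine ⟨2 ^ 44, by norm_num, ?_⟩
  intro Ω _ P hP n hn τ α hτ hα Xt ξ hXm hξm hXb hindep hL Z hZ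
  have hπ := Real.pi_pos
  have hn' : (0:ℝ) < n := by exact_mod_cast hn
  set b : ℝ := 2 * τ / α with hbdef
  have hb : 0 < b := by positivity
  have key := sum_abs_moment hb hξm hindep hL Finset.univ 8
  have hcard : ((Finset.univ : Finset (Fin n)).card : ℝ) = n := by
    rw [Finset.card_univ, Fintype.card_fin]
  rw [hcard] at key
  set S : Ω → ℝ := fun x => ∑ t, |ξ t x| with hSdef
  have hS0 : ∀ x, 0 ≤ S x := fun x => Finset.sum_nonneg fun t _ => abs_nonneg _
  set c : ℝ := (2 / (π * n)) ^ 4 * 2 ^ 7 with hcdef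
  have hc0 : 0 ≤ c := by positivity
  set g : Ω → ℝ := fun x => c * (((n:ℝ) * τ) ^ 8 + S x ^ 8) with hgdef
  have hgint : Integrable g P := ((integrable_const (((n:ℝ) * τ) ^ 8)).add key.1).const_mul c
  -- pointwise bound
  have hbound : ∀ᵐ x ∂P, (supNorm (periodogram n fun t => Z t x)) ^ 4 ≤ g x := by
    filter_upwards [hXb] with x hx
    set T : ℝ := ∑ t, |Z t x| with hTdef
    have hT0 : 0 ≤ T := Finset.sum_nonneg fun t _ => abs_nonneg _
    have hsle : supNorm (periodogram n fun t => Z t x) ≤ (2 / (π * n)) * T ^ 2 := by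
      apply Real.sSup_le
      · rintro y ⟨ω, -, rfl⟩
        exact periodogram_le hn _ ω
      · positivity
    have hs0 : 0 ≤ supNorm (periodogram n fun t => Z t x) :=
      Real.sSup_nonneg fun y hy => by
        obtain ⟨ω, -, rfl⟩ := hy; exact abs_nonneg _
    have h4 : (supNorm (periodogram n fun t => Z t x)) ^ 4
        ≤ ((2 / (π * n)) * T ^ 2) ^ 4 := pow_le_pow_left₀ hs0 hsle 4
    have hTle : T ≤ (n:ℝ) * τ + S x := by
      rw [hTdef]
      have : ∀ t : Fin n, |Z t x| ≤ τ + |ξ t x| := fun t => by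
        rw [hZ t x]
        exact (abs_add_le _ _).trans (by gcongr; exact hx t)
      calc ∑ t, |Z t x| ≤ ∑ t : Fin n, (τ + |ξ t x|) := Finset.sum_le_sum fun t _ => this t
        _ = (n:ℝ) * τ + S x := by
            rw [Finset.sum_add_distrib, Finset.sum_const, Finset.card_univ, Fintype.card_fin,
              nsmul_eq_mul]
    have hT8 : T ^ 8 ≤ 2 ^ 7 * (((n:ℝ) * τ) ^ 8 + S x ^ 8) := by
      calc T ^ 8 ≤ ((n:ℝ) * τ + S x) ^ 8 := pow_le_pow_left₀ hT0 hTle 8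
        _ ≤ 2 ^ (8 - 1) * (((n:ℝ) * τ) ^ 8 + S x ^ 8) :=
            add_pow_le (by positivity) (hS0 x) 8
        _ = 2 ^ 7 * (((n:ℝ) * τ) ^ 8 + S x ^ 8) := by norm_num
    calc (supNorm (periodogram n fun t => Z t x)) ^ 4 ≤ ((2 / (π * n)) * T ^ 2) ^ 4 := h4
      _ = (2 / (π * n)) ^ 4 * T ^ 8 := by rw [mul_pow, ← pow_mul]
      _ ≤ (2 / (π * n)) ^ 4 * (2 ^ 7 * (((n:ℝ) * τ) ^ 8 + S x ^ 8)) := by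
          refine mul_le_mul_of_nonneg_left hT8 (by positivity)
      _ = g x := by rw [hgdef, hcdef]; ring
  have hf0 : ∀ᵐ x ∂P, 0 ≤ (supNorm (periodogram n fun t => Z t x)) ^ 4 := by
    refine Filter.Eventually.of_forall fun x => ?_
    have hs0 : 0 ≤ supNorm (periodogram n fun t => Z t x) :=
      Real.sSup_nonneg fun y hy => by
        obtain ⟨ω, -, rfl⟩ := hy; exact abs_nonneg _
    positivity
  have hIle : ∫ x, (supNorm (periodogram n fun t => Z t x)) ^ 4 ∂P ≤ ∫ x, g x ∂P :=
    integral_mono_of_nonneg hf0 hgint hbound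
  have hgval : ∫ x, g x ∂P
      = c * (((n:ℝ) * τ) ^ 8 + b ^ 8 * ∏ j ∈ Finset.range 8, ((n : ℝ) + j)) := by
    rw [hgdef]
    rw [integral_const_mul, integral_add (integrable_const _) key.1, integral_const]
    simp [key.2]
  have hRHS : c * (((n:ℝ) * τ) ^ 8 + b ^ 8 * ∏ j ∈ Finset.range 8, ((n : ℝ) + j))
      = 2 ^ 11 * n ^ 4 * τ ^ 8 / π ^ 4
        + 2 ^ 19 * τ ^ 8 * (∏ k ∈ Finset.range 8, ((n : ℝ) + k))
          / (π ^ 4 * n ^ 4 * α ^ 8) := by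
    rw [hcdef, hbdef]
    field_simp
  have hfirst : ∫ x, (supNorm (periodogram n fun t => Z t x)) ^ 4 ∂P
      ≤ 2 ^ 11 * n ^ 4 * τ ^ 8 / π ^ 4
        + 2 ^ 19 * τ ^ 8 * (∏ k ∈ Finset.range 8, ((n : ℝ) + k))
          / (π ^ 4 * n ^ 4 * α ^ 8) := by
    rw [← hRHS, ← hgval]; exact hIle
  refine ⟨hfirst, hfirst.trans ?_⟩
  -- arithmetic comparison
  set m : ℝ := min 1 (α ^ 8) with hmdef
  have hm0 : 0 < m := lt_min one_pos (by positivity)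
  have hm1 : m ≤ 1 := min_le_left _ _
  have hmα : m ≤ α ^ 8 := min_le_right _ _
  have hπ4 : (1:ℝ) ≤ π ^ 4 := by
    have h3 : (3:ℝ) ≤ π := by linarith [Real.pi_gt_three]
    have h9 : (9:ℝ) ≤ π ^ 2 := by nlinarith
    nlinarith
  have hprod : (∏ k ∈ Finset.range 8, ((n : ℝ) + k)) ≤ 2 ^ 24 * (n:ℝ) ^ 8 := by
    have : (∏ k ∈ Finset.range 8, ((n : ℝ) + k)) ≤ ∏ _k ∈ Finset.range 8, (8 * (n:ℝ)) := by
      refine Finset.prod_le_prod (fun i _ => by positivity) fun i hi => ?_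
      rw [Finset.mem_range] at hi
      have : (i : ℝ) ≤ 7 := by exact_mod_cast Nat.lt_succ_iff.mp hi
      have hn1 : (1:ℝ) ≤ n := by exact_mod_cast hn
      nlinarith
    calc (∏ k ∈ Finset.range 8, ((n : ℝ) + k)) ≤ ∏ _k ∈ Finset.range 8, (8 * (n:ℝ)) := this
      _ = 8 ^ 8 * (n:ℝ) ^ 8 := by rw [Finset.prod_const, Finset.card_range, mul_pow]
      _ = 2 ^ 24 * (n:ℝ) ^ 8 := by norm_num
  have hterm1 : 2 ^ 11 * (n:ℝ) ^ 4 * τ ^ 8 / π ^ 4 ≤ 2 ^ 11 * (n:ℝ) ^ 4 * τ ^ 8 / m := by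
    apply div_le_div_of_nonneg_left (by positivity) hm0 (hm1.trans hπ4)
  have hterm2 : 2 ^ 19 * τ ^ 8 * (∏ k ∈ Finset.range 8, ((n : ℝ) + k))
      / (π ^ 4 * n ^ 4 * α ^ 8) ≤ 2 ^ 43 * (n:ℝ) ^ 4 * τ ^ 8 / m := by
    have hnum : 2 ^ 19 * τ ^ 8 * (∏ k ∈ Finset.range 8, ((n : ℝ) + k))
        ≤ 2 ^ 43 * (n:ℝ) ^ 8 * τ ^ 8 := by
      calc 2 ^ 19 * τ ^ 8 * (∏ k ∈ Finset.range 8, ((n : ℝ) + k))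
          ≤ 2 ^ 19 * τ ^ 8 * (2 ^ 24 * (n:ℝ) ^ 8) := by
            refine mul_le_mul_of_nonneg_left hprod (by positivity)
        _ = 2 ^ 43 * (n:ℝ) ^ 8 * τ ^ 8 := by ring
    have hden : (n:ℝ) ^ 4 * m ≤ π ^ 4 * n ^ 4 * α ^ 8 := by
      calc (n:ℝ) ^ 4 * m ≤ (n:ℝ) ^ 4 * α ^ 8 := by
            exact mul_le_mul_of_nonneg_left hmα (by positivity)
        _ ≤ π ^ 4 * n ^ 4 * α ^ 8 := by
            nlinarith [mul_nonneg (mul_nonneg (sub_nonneg.mpr hπ4) (pow_pos hn' 4).le)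
              (pow_pos hα 8).le]
    calc 2 ^ 19 * τ ^ 8 * (∏ k ∈ Finset.range 8, ((n : ℝ) + k)) / (π ^ 4 * n ^ 4 * α ^ 8)
        ≤ 2 ^ 43 * (n:ℝ) ^ 8 * τ ^ 8 / ((n:ℝ) ^ 4 * m) :=
          div_le_div₀ (by positivity) hnum (by positivity) hden
      _ = 2 ^ 43 * (n:ℝ) ^ 4 * τ ^ 8 / m := by
          field_simp
  calc 2 ^ 11 * (n:ℝ) ^ 4 * τ ^ 8 / π ^ 4
        + 2 ^ 19 * τ ^ 8 * (∏ k ∈ Finset.range 8, ((n : ℝ) + k)) / (π ^ 4 * n ^ 4 * α ^ 8)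
      ≤ 2 ^ 11 * (n:ℝ) ^ 4 * τ ^ 8 / m + 2 ^ 43 * (n:ℝ) ^ 4 * τ ^ 8 / m := by
        exact add_le_add hterm1 hterm2
    _ = (2 ^ 11 + 2 ^ 43) * (n:ℝ) ^ 4 * τ ^ 8 / m := by ring
    _ ≤ 2 ^ 44 * (n:ℝ) ^ 4 * τ ^ 8 / m := by
        refine div_le_div₀ (by positivity) ?_ hm0 le_rfl
        nlinarith [pow_pos hn' 4, pow_pos hτ 8]
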